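/- Let K be a complete nonarchimedean field, A its valuation ring, and M the A-module of power series Σ aₙ qⁿ ∈ A[[q]] (p-adically complete). Let Frob = V (substitution q ↦ q^p) and U as before. For f₀ ∈ ker U and λ ∈ A with |λ| < 1, the series f_λ = Σ_{j≥0} λ^j Frob^j(f₀) converges in M and satisfies U(f_λ) = λ f_λ. Consequently, for each such λ, the map f₀ ↦ f_λ is an injective A-linear map ker U → ker(U − λ). -/

import Mathlib

open Filter

lemma frob_iter_coeff (K : Type*) [Semiring K] (p : ℕ) :
    ∀ (j : ℕ) (f : PowerSeries K) (n : ℕ), PowerSeries.coeff (R := K) n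
      ((fun f => PowerSeries.mk fun n =>
        if p ∣ n then PowerSeries.coeff (R := K) (n / p) f else 0)^[j] f)
      = if p ^ j ∣ n then PowerSeries.coeff (R := K) (n / p ^ j) f else 0 := by
  intro j
  induction j with
  | zero => intro f n; simp
  | succ j ih =>
    intro f n
    rw [Function.iterate_succ_apply']
    simp only [PowerSeries.coeff_mk]
    by_cases h : p ∣ n
    · rw [if_pos h, ih f (n / p)]
      by_cases h2 : p ^ j ∣ n / p
      · have hdvd : p ^ (j + 1) ∣ n := by
          rw [pow_succ']
          exact (Nat.dvd_div_iff_mul_dvd h).mp h2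
        rw [if_pos h2, if_pos hdvd, Nat.div_div_eq_div_mul, ← pow_succ']
      · have hndvd : ¬ p ^ (j + 1) ∣ n := by
          intro hc
          exact h2 ((Nat.dvd_div_iff_mul_dvd h).mpr (by rwa [← pow_succ']))
        rw [if_neg h2, if_neg hndvd]
    · have : ¬ p ^ (j + 1) ∣ n := fun hc =>
        h (dvd_trans (dvd_pow_self p (Nat.succ_ne_zero j)) hc)
      rw [if_neg h, if_neg this]

theorem frobenius_eigenseries (K : Type*) [NontriviallyNormedField K]
    [IsUltrametricDist K] [CompleteSpace K] (p : ℕ) (hp : p.Prime)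
    (l : K) (hl : ‖l‖ < 1) :
    let U : PowerSeries K → PowerSeries K := fun f =>
      PowerSeries.mk fun n => PowerSeries.coeff (R := K) (p * n) f
    let Frob : PowerSeries K → PowerSeries K := fun f =>
      PowerSeries.mk fun n => if p ∣ n then PowerSeries.coeff (R := K) (n / p) f else 0
    let Φ : PowerSeries K → PowerSeries K := fun f =>
      PowerSeries.mk fun n => ∑ j ∈ Finset.range (n + 1),
        if p ^ j ∣ n then l ^ j * PowerSeries.coeff (R := K) (n / p ^ j) f else 0
    (∀ f g, Φ (f + g) = Φ f + Φ g) ∧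
    (∀ (c : K) (f : PowerSeries K), Φ (c • f) = c • Φ f) ∧
    (∀ f₀ : PowerSeries K, (∀ n, ‖PowerSeries.coeff (R := K) n f₀‖ ≤ 1) → U f₀ = 0 →
      TendstoUniformly
        (fun m => fun n : ℕ =>
          PowerSeries.coeff (R := K) n (∑ j ∈ Finset.range m, l ^ j • Frob^[j] f₀))
        (fun n : ℕ => PowerSeries.coeff (R := K) n (Φ f₀)) atTop ∧
      U (Φ f₀) = l • Φ f₀) ∧
    Set.InjOn Φ {f | U f = 0} := by
  intro U Frob Φ
  have hp2 : 2 ≤ p := hp.two_le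
  have hppos : 0 < p := hp.pos
  have hlt : ∀ n j : ℕ, n + 1 ≤ j → n < p ^ j := by
    intro n j hj
    calc n < 2 ^ n := Nat.lt_two_pow_self
    _ ≤ 2 ^ j := Nat.pow_le_pow_right (by norm_num) (le_trans (Nat.le_succ n) hj)
    _ ≤ p ^ j := Nat.pow_le_pow_left hp2 j
  refine ⟨?_, ?_, ?_, ?_⟩
  · -- additivity
    intro f g
    ext n
    simp only [Φ, PowerSeries.coeff_mk, map_add, mul_add, ← Finset.sum_add_distrib]
    refine Finset.sum_congr rfl fun j _ => ?_
    split_ifs with h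
    · ring
    · simp
  · -- smul
    intro c f
    ext n
    simp only [Φ, PowerSeries.coeff_mk, map_smul, smul_eq_mul, Finset.mul_sum]
    refine Finset.sum_congr rfl fun j _ => ?_
    split_ifs with h
    · ring
    · simp
  · -- convergence and eigenvalue equation
    intro f₀ hb hU
    have hUc : ∀ n, PowerSeries.coeff (R := K) (p * n) f₀ = 0 := by
      intro n
      have := congrArg (PowerSeries.coeff (R := K) n) hU
      simpa [U] using this
    have h0 : PowerSeries.coeff (R := K) 0 f₀ = 0 := by simpa using hUc 0
    -- term vanishing
    have htz : ∀ n j : ℕ, n < p ^ j →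
        (if p ^ j ∣ n then l ^ j * PowerSeries.coeff (R := K) (n / p ^ j) f₀ else 0) = 0 := by
      intro n j h
      rcases Nat.eq_zero_or_pos n with rfl | hn
      · simp [h0]
      · rw [if_neg fun hd => absurd (Nat.le_of_dvd hn hd) (not_le.mpr h)]
    -- partial sums coefficientwise
    have hpart : ∀ m n : ℕ,
        PowerSeries.coeff (R := K) n (∑ j ∈ Finset.range m, l ^ j • Frob^[j] f₀)
        = ∑ j ∈ Finset.range m,
            (if p ^ j ∣ n then l ^ j * PowerSeries.coeff (R := K) (n / p ^ j) f₀ else 0) := by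
      intro m n
      rw [map_sum]
      refine Finset.sum_congr rfl fun j _ => ?_
      rw [map_smul, smul_eq_mul]
      simp only [Frob]
      rw [frob_iter_coeff K p j f₀ n]
      split_ifs with h
      · rfl
      · rw [mul_zero]
    have hΦc : ∀ n : ℕ, PowerSeries.coeff (R := K) n (Φ f₀)
        = ∑ j ∈ Finset.range (n + 1),
            (if p ^ j ∣ n then l ^ j * PowerSeries.coeff (R := K) (n / p ^ j) f₀ else 0) := by
      intro n
      simp only [Φ, PowerSeries.coeff_mk]
    have hterm : ∀ n j : ℕ,
        ‖(if p ^ j ∣ n then l ^ j * PowerSeries.coeff (R := K) (n / p ^ j) f₀ else 0)‖ ≤ ‖l‖ ^ j := by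
      intro n j
      split_ifs with h
      · rw [norm_mul, norm_pow]
        calc ‖l‖ ^ j * ‖PowerSeries.coeff (R := K) (n / p ^ j) f₀‖
            ≤ ‖l‖ ^ j * 1 := by
              exact mul_le_mul_of_nonneg_left (hb _) (pow_nonneg (norm_nonneg l) j)
        _ = ‖l‖ ^ j := mul_one _
      · simpa using pow_nonneg (norm_nonneg l) j
    have key : ∀ m n : ℕ,
        ‖PowerSeries.coeff (R := K) n (Φ f₀) -
          PowerSeries.coeff (R := K) n (∑ j ∈ Finset.range m, l ^ j • Frob^[j] f₀)‖ ≤ ‖l‖ ^ m := by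
      intro m n
      rw [hpart, hΦc]
      set M := max m (n + 1) with hM
      have hsub1 : ∑ j ∈ Finset.range (n + 1),
          (if p ^ j ∣ n then l ^ j * PowerSeries.coeff (R := K) (n / p ^ j) f₀ else 0)
          = ∑ j ∈ Finset.range M,
          (if p ^ j ∣ n then l ^ j * PowerSeries.coeff (R := K) (n / p ^ j) f₀ else 0) := by
        refine Finset.sum_subset (Finset.range_subset_range.mpr (le_max_right _ _)) ?_
        intro j _ hj
        exact htz n j (hlt n j (le_of_not_gt (by simpa [Finset.mem_range] using hj)))
      have hsplit : ∑ j ∈ Finset.range M,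
          (if p ^ j ∣ n then l ^ j * PowerSeries.coeff (R := K) (n / p ^ j) f₀ else 0)
          = (∑ j ∈ Finset.range m,
            (if p ^ j ∣ n then l ^ j * PowerSeries.coeff (R := K) (n / p ^ j) f₀ else 0))
          + ∑ j ∈ Finset.Ico m M,
            (if p ^ j ∣ n then l ^ j * PowerSeries.coeff (R := K) (n / p ^ j) f₀ else 0) := by
        rw [Finset.range_eq_Ico, Finset.range_eq_Ico]
        exact (Finset.sum_Ico_consecutive _ (Nat.zero_le m) (le_max_left m (n + 1))).symm
      rw [hsub1, hsplit, add_sub_cancel_left]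
      refine IsUltrametricDist.norm_sum_le_of_forall_le_of_nonneg
        (pow_nonneg (norm_nonneg l) m) ?_
      intro j hj
      refine (hterm n j).trans ?_
      exact pow_le_pow_of_le_one (norm_nonneg l) hl.le (Finset.mem_Ico.mp hj).1
    constructor
    · -- uniform convergence
      rw [Metric.tendstoUniformly_iff]
      intro ε hε
      have hpow : Tendsto (fun m : ℕ => ‖l‖ ^ m) atTop (nhds 0) :=
        tendsto_pow_atTop_nhds_zero_of_lt_one (norm_nonneg l) hl
      filter_upwards [(hpow.eventually (gt_mem_nhds hε) : _)] with m hm n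
      rw [dist_eq_norm]
      exact lt_of_le_of_lt (key m n) hm
    · -- eigenvalue equation
      ext n
      have hUl : PowerSeries.coeff (R := K) n (U (Φ f₀))
          = ∑ j ∈ Finset.range (p * n + 1),
            (if p ^ j ∣ p * n then l ^ j * PowerSeries.coeff (R := K) (p * n / p ^ j) f₀ else 0) := by
        simp only [U, Φ, PowerSeries.coeff_mk]
      rw [hUl, Finset.sum_range_succ']
      have h00 : (if p ^ 0 ∣ p * n then l ^ 0 * PowerSeries.coeff (R := K) (p * n / p ^ 0) f₀ else 0)
          = 0 := by
        simp [hUc n]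
      rw [h00, add_zero]
      have hstep : ∀ j : ℕ,
          (if p ^ (j + 1) ∣ p * n then l ^ (j + 1) *
            PowerSeries.coeff (R := K) (p * n / p ^ (j + 1)) f₀ else 0)
          = l * (if p ^ j ∣ n then l ^ j * PowerSeries.coeff (R := K) (n / p ^ j) f₀ else 0) := by
        intro j
        have hd : p ^ (j + 1) ∣ p * n ↔ p ^ j ∣ n := by
          rw [pow_succ']; exact Nat.mul_dvd_mul_iff_left hppos
        have hq : p * n / p ^ (j + 1) = n / p ^ j := by
          rw [pow_succ']; exact Nat.mul_div_mul_left _ _ hppos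
        simp only [hd, hq]
        split_ifs with h
        · rw [pow_succ' l j]; ring
        · rw [mul_zero]
      have hsum : ∑ j ∈ Finset.range (p * n),
          (if p ^ (j + 1) ∣ p * n then l ^ (j + 1) *
            PowerSeries.coeff (R := K) (p * n / p ^ (j + 1)) f₀ else 0)
          = l * ∑ j ∈ Finset.range (p * n),
            (if p ^ j ∣ n then l ^ j * PowerSeries.coeff (R := K) (n / p ^ j) f₀ else 0) := by
        rw [Finset.mul_sum]
        exact Finset.sum_congr rfl fun j _ => hstep j
      rw [hsum]
      have hext : ∑ j ∈ Finset.range (p * n),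
          (if p ^ j ∣ n then l ^ j * PowerSeries.coeff (R := K) (n / p ^ j) f₀ else 0)
          = ∑ j ∈ Finset.range (n + 1),
            (if p ^ j ∣ n then l ^ j * PowerSeries.coeff (R := K) (n / p ^ j) f₀ else 0) := by
        set M := max (p * n) (n + 1) with hM
        rw [show ∑ j ∈ Finset.range (n + 1),
            (if p ^ j ∣ n then l ^ j * PowerSeries.coeff (R := K) (n / p ^ j) f₀ else 0)
            = ∑ j ∈ Finset.range M,
            (if p ^ j ∣ n then l ^ j * PowerSeries.coeff (R := K) (n / p ^ j) f₀ else 0) from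
          Finset.sum_subset (Finset.range_subset_range.mpr (le_max_right _ _)) fun j _ hj =>
            htz n j (hlt n j (le_of_not_gt (by simpa [Finset.mem_range] using hj)))]
        refine Finset.sum_subset (Finset.range_subset_range.mpr (le_max_left _ _)) ?_
        intro j _ hj
        have hjge : p * n ≤ j := le_of_not_gt (by simpa [Finset.mem_range] using hj)
        rcases Nat.eq_zero_or_pos n with rfl | hn
        · exact htz 0 j (pow_pos hppos j)
        · refine htz n j (hlt n j (le_trans ?_ hjge))
          calc n + 1 ≤ n + n := by omega
          _ = 2 * n := by ring
          _ ≤ p * n := Nat.mul_le_mul_right n hp2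
      rw [hext]
      have hrhs : PowerSeries.coeff (R := K) n (l • Φ f₀)
          = l * ∑ j ∈ Finset.range (n + 1),
            (if p ^ j ∣ n then l ^ j * PowerSeries.coeff (R := K) (n / p ^ j) f₀ else 0) := by
        rw [map_smul, smul_eq_mul]
        simp only [Φ, PowerSeries.coeff_mk]
      rw [hrhs]
  · -- injectivity
    intro f _ g _ hfg
    ext n
    induction n using Nat.strong_induction_on with
    | _ n ih =>
      have e := congrArg (PowerSeries.coeff (R := K) n) hfg
      simp only [Φ, PowerSeries.coeff_mk] at e
      rw [Finset.sum_range_succ', Finset.sum_range_succ'] at e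
      have hsum : ∑ j ∈ Finset.range n,
          (if p ^ (j + 1) ∣ n then l ^ (j + 1) *
            PowerSeries.coeff (R := K) (n / p ^ (j + 1)) f else 0)
          = ∑ j ∈ Finset.range n,
          (if p ^ (j + 1) ∣ n then l ^ (j + 1) *
            PowerSeries.coeff (R := K) (n / p ^ (j + 1)) g else 0) := by
        refine Finset.sum_congr rfl fun j hj => ?_
        split_ifs with h
        · rw [ih (n / p ^ (j + 1)) (Nat.div_lt_self
            (Nat.pos_of_ne_zero fun h0 => by simp [h0] at hj)
            (Nat.one_lt_pow (Nat.succ_ne_zero j) hp.one_lt))]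
        · rfl
      rw [hsum] at e
      have := add_left_cancel e
      simpa using this
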